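/- In the discrete setting with N cost matrices, the utilitarian problem inf over (P_1,...,P_N) ∈ Γ^N_{a,b} of Σ_i ⟨P_i, C_i⟩ equals the single-cost optimal transport value W_{min_i C_i}(a,b), where min_i C_i is the entrywise minimum of the matrices C_i. -/

import Mathlib

open Finset

/-- Frobenius inner product of two matrices. -/
def dot {n m : ℕ} (P C : Matrix (Fin n) (Fin m) ℝ) : ℝ := ∑ i, ∑ j, P i j * C i j

/-- `P` is a coupling of the probability vectors `a` and `b`. -/
def IsCoupling {n m : ℕ} (a : Fin n → ℝ) (b : Fin m → ℝ)
    (P : Matrix (Fin n) (Fin m) ℝ) : Prop :=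
  (∀ i j, 0 ≤ P i j) ∧ (∀ i, ∑ j, P i j = a i) ∧ (∀ j, ∑ i, P i j = b j)

/-- Discrete optimal transport value. -/
noncomputable def W {n m : ℕ} (a : Fin n → ℝ) (b : Fin m → ℝ)
    (C : Matrix (Fin n) (Fin m) ℝ) : ℝ :=
  sInf {t | ∃ P, IsCoupling a b P ∧ t = dot P C}

/-- The constraint set `Γ^N_{a,b}` of coupling decompositions. -/
def Gamma (N : ℕ) {n m : ℕ} (a : Fin n → ℝ) (b : Fin m → ℝ) :
    Set (Fin N → Matrix (Fin n) (Fin m) ℝ) :=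
  {P | (∀ k i j, 0 ≤ P k i j) ∧ (∀ i, ∑ k, ∑ j, P k i j = a i) ∧
       (∀ j, ∑ k, ∑ i, P k i j = b j)}

/-- Discrete equitable optimal transport value. -/
noncomputable def EOT {N n m : ℕ} (a : Fin n → ℝ) (b : Fin m → ℝ)
    (C : Fin N → Matrix (Fin n) (Fin m) ℝ) : ℝ :=
  sInf {t | ∃ P ∈ Gamma N a b, t = ⨆ i, dot (P i) (C i)}

/-- The utilitarian problem `inf_{(P_i)∈Γ^N_{a,b}} ∑_i ⟨P_i,C_i⟩` equals
`W_{min_i C_i}(a,b)` where `min_i C_i` is the entrywise minimum. -/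
theorem stmt_3 (N n m : ℕ) (hN : 0 < N) (a : Fin n → ℝ) (b : Fin m → ℝ)
    (ha : a ∈ stdSimplex ℝ (Fin n)) (hb : b ∈ stdSimplex ℝ (Fin m))
    (C : Fin N → Matrix (Fin n) (Fin m) ℝ) :
    sInf {t | ∃ P ∈ Gamma N a b, t = ∑ i, dot (P i) (C i)} =
      W a b (fun k l => ⨅ i, C i k l) := by
  classical
  set Cmin : Matrix (Fin n) (Fin m) ℝ := fun k l => ⨅ i, C i k l with hCmin
  set S : Set ℝ := {t | ∃ P ∈ Gamma N a b, t = ∑ i, dot (P i) (C i)} with hSdef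
  set T : Set ℝ := {t | ∃ P, IsCoupling a b P ∧ t = dot P Cmin} with hTdef
  have : Nonempty (Fin N) := ⟨⟨0, hN⟩⟩
  have ha0 : ∀ i, 0 ≤ a i := ha.1
  have hb0 : ∀ j, 0 ≤ b j := hb.1
  have ha1 : ∀ i, a i ≤ 1 := by
    intro i
    calc a i ≤ ∑ i', a i' := Finset.single_le_sum (fun i' _ => ha0 i') (mem_univ i)
    _ = 1 := ha.2
  -- argmin selector
  obtain ⟨k0, hk0⟩ : ∃ k0 : Fin n → Fin m → Fin N, ∀ i j k, C (k0 i j) i j ≤ C k i j := by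
    choose k0 hk0 using fun i j =>
      Finset.exists_min_image (univ : Finset (Fin N)) (fun k => C k i j) ⟨⟨0, hN⟩, mem_univ _⟩
    exact ⟨k0, fun i j k => (hk0 i j).2 k (mem_univ k)⟩
  have hmin : ∀ i j, Cmin i j = C (k0 i j) i j := fun i j =>
    le_antisymm (ciInf_le (Set.finite_range _).bddBelow _) (le_ciInf (hk0 i j))
  have hminle : ∀ i j k, Cmin i j ≤ C k i j := fun i j k => (hmin i j) ▸ hk0 i j k
  -- T ⊆ S
  have hTS : T ⊆ S := by
    rintro t ⟨Q, ⟨hQ0, hQa, hQb⟩, rfl⟩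
    refine ⟨fun k i j => if k = k0 i j then Q i j else 0, ⟨?_, ?_, ?_⟩, ?_⟩
    · intro k i j; dsimp only; split
      · exact hQ0 i j
      · exact le_refl 0
    · intro i; rw [Finset.sum_comm]
      simp [Finset.sum_ite_eq', hQa i]
    · intro j; rw [Finset.sum_comm]
      simp [Finset.sum_ite_eq', hQb j]
    · symm
      simp only [dot]
      rw [Finset.sum_comm]
      refine Finset.sum_congr rfl fun i _ => ?_
      rw [Finset.sum_comm]
      refine Finset.sum_congr rfl fun j _ => ?_
      simp [ite_mul, Finset.sum_ite_eq', hmin i j]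
  -- T nonempty via product coupling
  have hTne : T.Nonempty := by
    refine ⟨dot (fun i j => a i * b j) Cmin, ⟨fun i j => a i * b j, ⟨?_, ?_, ?_⟩, rfl⟩⟩
    · intro i j; exact mul_nonneg (ha0 i) (hb0 j)
    · intro i; rw [← Finset.mul_sum, hb.2, mul_one]
    · intro j; rw [← Finset.sum_mul, ha.2, one_mul]
  have hSne : S.Nonempty := hTne.mono hTS
  -- lower bound for S
  set M : ℝ := ∑ k, ∑ i, ∑ j, |C k i j| with hM
  have hSbdd : BddBelow S := by
    refine ⟨-M, ?_⟩
    rintro t ⟨P, ⟨hP0, hPa, hPb⟩, rfl⟩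
    have hP1 : ∀ k i j, P k i j ≤ 1 := by
      intro k i j
      have h1 : P k i j ≤ ∑ j', P k i j' :=
        Finset.single_le_sum (fun j' _ => hP0 k i j') (mem_univ j)
      have h2 : ∑ j', P k i j' ≤ ∑ k', ∑ j', P k' i j' :=
        Finset.single_le_sum (fun k' _ => Finset.sum_nonneg fun j' _ => hP0 k' i j')
          (mem_univ k)
      calc P k i j ≤ ∑ k', ∑ j', P k' i j' := le_trans h1 h2
        _ = a i := hPa i
        _ ≤ 1 := ha1 i
    rw [hM, ← Finset.sum_neg_distrib]
    refine Finset.sum_le_sum fun k _ => ?_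
    rw [dot, ← Finset.sum_neg_distrib]
    refine Finset.sum_le_sum fun i _ => ?_
    rw [← Finset.sum_neg_distrib]
    refine Finset.sum_le_sum fun j _ => ?_
    have h0 := hP0 k i j
    have h1 := hP1 k i j
    have habs : 0 ≤ C k i j + |C k i j| := by
      rcases abs_cases (C k i j) with ⟨h, _⟩ | ⟨h, _⟩ <;> rw [h] <;> linarith [abs_nonneg (C k i j)]
    nlinarith [mul_nonneg h0 habs, mul_nonneg (sub_nonneg.2 h1) (abs_nonneg (C k i j))]
  have hTbdd : BddBelow T := hSbdd.mono hTS
  -- sInf T is a lower bound for S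
  have h2 : ∀ s ∈ S, sInf T ≤ s := by
    rintro s ⟨P, ⟨hP0, hPa, hPb⟩, rfl⟩
    have hQ : IsCoupling a b (fun i j => ∑ k, P k i j) := by
      refine ⟨fun i j => Finset.sum_nonneg fun k _ => hP0 k i j, ?_, ?_⟩
      · intro i; rw [Finset.sum_comm]; exact hPa i
      · intro j; rw [Finset.sum_comm]; exact hPb j
    have ht : dot (fun i j => ∑ k, P k i j) Cmin ∈ T := ⟨_, hQ, rfl⟩
    refine le_trans (csInf_le hTbdd ht) ?_
    show ∑ i, ∑ j, (∑ k, P k i j) * Cmin i j ≤ _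
    rw [show (∑ k, dot (P k) (C k)) = ∑ i, ∑ j, ∑ k, P k i j * C k i j by
      simp only [dot]; rw [Finset.sum_comm]
      exact Finset.sum_congr rfl fun i _ => by rw [Finset.sum_comm]]
    refine Finset.sum_le_sum fun i _ => Finset.sum_le_sum fun j _ => ?_
    rw [Finset.sum_mul]
    exact Finset.sum_le_sum fun k _ =>
      mul_le_mul_of_nonneg_left (hminle i j k) (hP0 k i j)
  have h1 : sInf S ≤ sInf T := csInf_le_csInf hSbdd hTne hTS
  have := le_csInf hSne h2
  rw [W]
  exact le_antisymm h1 this
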